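/- arXiv:2004.00551 — 5 statements merged into one kernel-verified Lean document; each statement's English description precedes it below -/
import Mathlib

section
/- Let L be an n-dimensional complex Lie algebra with ordered basis x_1,…,x_n and let φ be a Lie algebra automorphism of L with matrix representation B_φ = (b_{ij}) determined by φ(x_i) = Σ_j b_{ij} x_j. Then for all (z_0,z_1,…,z_n) ∈ ℂ^{n+1}, Q_L(z_0, z') = Q_L(z_0, z'B_φ), where z' = (z_1,…,z_n) and z'B_φ denotes the row vector obtained by right multiplication by B_φ. -/
open scoped BigOperators

/-- The characteristic polynomial of a finite-dimensional complex Lie algebra is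
invariant under its automorphism group: if `φ ∈ Aut(L)` has matrix representation `B_φ`
(given by `φ(xᵢ) = ∑ⱼ bᵢⱼ xⱼ`), then `Q_L(z₀, z') = Q_L(z₀, z'B_φ)`. -/
theorem stmt1 {n : ℕ} {L : Type*} [LieRing L] [LieAlgebra ℂ L]
    (x : Module.Basis (Fin n) ℂ L) (φ : L ≃ₗ⁅ℂ⁆ L)
    (B : Matrix (Fin n) (Fin n) ℂ)
    (hB : ∀ i, φ (x i) = ∑ j, B i j • x j) :
    ∀ (z0 : ℂ) (z : Fin n → ℂ),
      LinearMap.det (z0 • (LinearMap.id : L →ₗ[ℂ] L)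
          + ∑ i, z i • LieAlgebra.ad ℂ L (x i)) =
      LinearMap.det (z0 • (LinearMap.id : L →ₗ[ℂ] L)
          + ∑ i, (Matrix.vecMul z B) i • LieAlgebra.ad ℂ L (x i)) := by
  intro z0 z
  -- `ad` is linear, so a linear combination of `ad (x i)` is `ad` of a linear combination.
  have key : ∀ c : Fin n → ℂ, ∑ i, c i • LieAlgebra.ad ℂ L (x i)
      = LieAlgebra.ad ℂ L (∑ i, c i • x i) := by
    intro c
    have h : LieAlgebra.ad ℂ L (∑ i, c i • x i)
        = ∑ i, c i • LieAlgebra.ad ℂ L (x i) := by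
      rw [map_sum]
      simp_rw [map_smul]
    exact h.symm
  set w : L := ∑ i, z i • x i with hw
  -- the image of `w` under `φ` has coordinates `z B`.
  have hφw : φ w = ∑ j, Matrix.vecMul z B j • x j := by
    have h1 : φ w = ∑ i, z i • φ (x i) := by
      rw [← LieEquiv.coe_toLinearEquiv, hw]
      simp [map_sum]
    rw [h1]
    simp only [hB, Finset.smul_sum, smul_smul]
    rw [Finset.sum_comm]
    simp [Matrix.vecMul, dotProduct, Finset.sum_smul]
  rw [key z, key (Matrix.vecMul z B), ← hφw, ← hw]
  -- `z0 • id + ad (φ w)` is conjugate to `z0 • id + ad w` by `φ`.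
  have hconj : (z0 • (LinearMap.id : L →ₗ[ℂ] L) + LieAlgebra.ad ℂ L (φ w))
      = φ.toLinearEquiv.conj (z0 • (LinearMap.id : L →ₗ[ℂ] L) + LieAlgebra.ad ℂ L w) := by
    ext y
    simp [LinearEquiv.conj_apply_apply, LieAlgebra.ad_apply, LieEquiv.coe_toLinearEquiv,
      LieEquiv.map_lie]
  rw [hconj, LinearEquiv.conj_apply, LinearMap.comp_assoc, LinearMap.det_conj]
end

section
/- Let L be a complex Lie algebra with basis H, X, Y satisfying [H,X] = 2X, [H,Y] = −2Y and [X,Y] = H (i.e., L ≅ sl(2,ℂ)), and let φ be a Lie algebra automorphism of L with matrix representation B_φ determined by φ applied to the ordered basis (H,X,Y). Then B_φ is a unitary matrix if and only if B_φ is either the diagonal matrix diag(1, α, \bar{α}) for some α ∈ ℂ with |α| = 1, or the matrix with first row (−1,0,0), second row (0,0,β), third row (0,\bar{β},0) for some β ∈ ℂ with |β| = 1. -/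
open scoped BigOperators ComplexConjugate



lemma coeff3 {L : Type*} [LieRing L] [LieAlgebra ℂ L]
    (b : Module.Basis (Fin 3) ℂ L) {f0 f1 f2 g0 g1 g2 : ℂ}
    (h : f0 • b 0 + f1 • b 1 + f2 • b 2 = g0 • b 0 + g1 • b 1 + g2 • b 2) :
    f0 = g0 ∧ f1 = g1 ∧ f2 = g2 := by
  refine ⟨?_, ?_, ?_⟩ <;>
  · first
    | (have h' := congrArg (fun x => b.repr x 0) h
       simpa [Finsupp.single_apply] using h')
    | (have h' := congrArg (fun x => b.repr x 1) h
       simpa [Finsupp.single_apply] using h')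
    | (have h' := congrArg (fun x => b.repr x 2) h
       simpa [Finsupp.single_apply] using h')

lemma aux9 {L : Type*} [LieRing L] [LieAlgebra ℂ L]
    (b : Module.Basis (Fin 3) ℂ L)
    (hHX : ⁅b 0, b 1⁆ = (2 : ℂ) • b 1)
    (hHY : ⁅b 0, b 2⁆ = (-2 : ℂ) • b 2)
    (hXY : ⁅b 1, b 2⁆ = b 0)
    (ψ : L ≃ₗ⁅ℂ⁆ L)
    (M : Matrix (Fin 3) (Fin 3) ℂ)
    (hM : ∀ i, ψ (b i) = ∑ j, M i j • b j) :
    (M 0 1 * M 1 2 - M 0 2 * M 1 1 = 2 * M 1 0) ∧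
    (2 * (M 0 0 * M 1 1 - M 0 1 * M 1 0) = 2 * M 1 1) ∧
    (2 * (M 0 2 * M 1 0 - M 0 0 * M 1 2) = 2 * M 1 2) ∧
    (M 0 1 * M 2 2 - M 0 2 * M 2 1 = -2 * M 2 0) ∧
    (2 * (M 0 0 * M 2 1 - M 0 1 * M 2 0) = -2 * M 2 1) ∧
    (2 * (M 0 2 * M 2 0 - M 0 0 * M 2 2) = -2 * M 2 2) ∧
    (M 1 1 * M 2 2 - M 1 2 * M 2 1 = M 0 0) ∧
    (2 * (M 1 0 * M 2 1 - M 1 1 * M 2 0) = M 0 1) ∧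
    (2 * (M 1 2 * M 2 0 - M 1 0 * M 2 2) = M 0 2) := by
  have h10 : ⁅b 1, b 0⁆ = (-2 : ℂ) • b 1 := by
    rw [← lie_skew, hHX]; module
  have h20 : ⁅b 2, b 0⁆ = (2 : ℂ) • b 2 := by
    rw [← lie_skew, hHY]; module
  have h21 : ⁅b 2, b 1⁆ = -b 0 := by
    rw [← lie_skew, hXY]
  have hM' : ∀ i, ψ (b i) = M i 0 • b 0 + M i 1 • b 1 + M i 2 • b 2 := by
    intro i; rw [hM i, Fin.sum_univ_three]
  have hsm : ∀ (c : ℂ) (x : L), ψ (c • x) = c • ψ x := fun c x => ψ.map_smul c x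
  have lie_pq : ∀ p q : Fin 3, ⁅ψ (b p), ψ (b q)⁆ =
      (M p 1 * M q 2 - M p 2 * M q 1) • b 0 +
      (2 * (M p 0 * M q 1 - M p 1 * M q 0)) • b 1 +
      (2 * (M p 2 * M q 0 - M p 0 * M q 2)) • b 2 := by
    intro p q
    rw [hM' p, hM' q]
    simp only [lie_add, add_lie, lie_smul, smul_lie, hHX, hHY, hXY, h10, h20, h21, lie_self]
    module
  have k01 : (M 0 1 * M 1 2 - M 0 2 * M 1 1) • b 0 +
      (2 * (M 0 0 * M 1 1 - M 0 1 * M 1 0)) • b 1 +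
      (2 * (M 0 2 * M 1 0 - M 0 0 * M 1 2)) • b 2 =
      (2 * M 1 0) • b 0 + (2 * M 1 1) • b 1 + (2 * M 1 2) • b 2 := by
    rw [← lie_pq 0 1, ← ψ.map_lie, hHX, hsm, hM' 1]; module
  have k02 : (M 0 1 * M 2 2 - M 0 2 * M 2 1) • b 0 +
      (2 * (M 0 0 * M 2 1 - M 0 1 * M 2 0)) • b 1 +
      (2 * (M 0 2 * M 2 0 - M 0 0 * M 2 2)) • b 2 =
      (-2 * M 2 0) • b 0 + (-2 * M 2 1) • b 1 + (-2 * M 2 2) • b 2 := by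
    rw [← lie_pq 0 2, ← ψ.map_lie, hHY, hsm, hM' 2]; module
  have k12 : (M 1 1 * M 2 2 - M 1 2 * M 2 1) • b 0 +
      (2 * (M 1 0 * M 2 1 - M 1 1 * M 2 0)) • b 1 +
      (2 * (M 1 2 * M 2 0 - M 1 0 * M 2 2)) • b 2 =
      (M 0 0) • b 0 + (M 0 1) • b 1 + (M 0 2) • b 2 := by
    rw [← lie_pq 1 2, ← ψ.map_lie, hXY, hM' 0]
  obtain ⟨a1, a2, a3⟩ := coeff3 b k01
  obtain ⟨b1, b2, b3⟩ := coeff3 b k02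
  obtain ⟨c1, c2, c3⟩ := coeff3 b k12
  exact ⟨a1, a2, a3, b1, b2, b3, c1, c2, c3⟩


lemma absone (z : ℂ) (h : z * conj z = 1) : ‖z‖ = 1 := by
  rw [Complex.mul_conj] at h
  have h' : Complex.normSq z = 1 := by exact_mod_cast h
  have h2 : ‖z‖ ^ 2 = 1 := by rw [Complex.sq_norm, h']
  have h3 : (‖z‖ - 1) * (‖z‖ + 1) = 0 := by linear_combination h2
  rcases mul_eq_zero.mp h3 with h4 | h4
  · linarith
  · have := norm_nonneg z; linarith


/-- For `sl(2,ℂ)` with basis `(H, X, Y)` and an automorphism `φ` with matrix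
representation `B_φ`, the matrix `B_φ` is unitary if and only if it is `diag(1, α, conj α)`
for some unimodular `α`, or the matrix with rows `(-1,0,0)`, `(0,0,β)`, `(0,conj β,0)` for
some unimodular `β`. -/
theorem stmt7 {L : Type*} [LieRing L] [LieAlgebra ℂ L]
    (b : Module.Basis (Fin 3) ℂ L)
    (hHX : ⁅b 0, b 1⁆ = (2 : ℂ) • b 1)
    (hHY : ⁅b 0, b 2⁆ = (-2 : ℂ) • b 2)
    (hXY : ⁅b 1, b 2⁆ = b 0)
    (φ : L ≃ₗ⁅ℂ⁆ L)
    (B : Matrix (Fin 3) (Fin 3) ℂ)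
    (hB : ∀ i, φ (b i) = ∑ j, B i j • b j) :
    B * B.conjTranspose = 1 ↔
      ((∃ α : ℂ, ‖α‖ = 1 ∧ B = !![1, 0, 0; 0, α, 0; 0, 0, conj α]) ∨
       (∃ β : ℂ, ‖β‖ = 1 ∧ B = !![-1, 0, 0; 0, 0, β; 0, conj β, 0])) := by
  constructor
  · intro hU
    have hU2 : B.conjTranspose * B = 1 := mul_eq_one_comm.mp hU
    -- unitarity scalar facts
    have u11 : B 1 0 * conj (B 1 0) + B 1 1 * conj (B 1 1) + B 1 2 * conj (B 1 2) = 1 := by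
      have h := congrArg (fun M => M 1 1) hU
      simpa [Matrix.mul_apply, Fin.sum_univ_three, Matrix.conjTranspose_apply,
        Complex.star_def, Matrix.one_apply] using h
    have w00 : conj (B 0 0) * B 0 0 + conj (B 1 0) * B 1 0 + conj (B 2 0) * B 2 0 = 1 := by
      have h := congrArg (fun M => M 0 0) hU2
      simpa [Matrix.mul_apply, Fin.sum_univ_three, Matrix.conjTranspose_apply,
        Complex.star_def, Matrix.one_apply] using h
    have w01 : conj (B 0 0) * B 0 1 + conj (B 1 0) * B 1 1 + conj (B 2 0) * B 2 1 = 0 := by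
      have h := congrArg (fun M => M 0 1) hU2
      simpa [Matrix.mul_apply, Fin.sum_univ_three, Matrix.conjTranspose_apply,
        Complex.star_def, Matrix.one_apply] using h
    have w02 : conj (B 0 0) * B 0 2 + conj (B 1 0) * B 1 2 + conj (B 2 0) * B 2 2 = 0 := by
      have h := congrArg (fun M => M 0 2) hU2
      simpa [Matrix.mul_apply, Fin.sum_univ_three, Matrix.conjTranspose_apply,
        Complex.star_def, Matrix.one_apply] using h
    have w10 : conj (B 0 1) * B 0 0 + conj (B 1 1) * B 1 0 + conj (B 2 1) * B 2 0 = 0 := by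
      have h := congrArg (fun M => M 1 0) hU2
      simpa [Matrix.mul_apply, Fin.sum_univ_three, Matrix.conjTranspose_apply,
        Complex.star_def, Matrix.one_apply] using h
    have w11 : conj (B 0 1) * B 0 1 + conj (B 1 1) * B 1 1 + conj (B 2 1) * B 2 1 = 1 := by
      have h := congrArg (fun M => M 1 1) hU2
      simpa [Matrix.mul_apply, Fin.sum_univ_three, Matrix.conjTranspose_apply,
        Complex.star_def, Matrix.one_apply] using h
    have w12 : conj (B 0 1) * B 0 2 + conj (B 1 1) * B 1 2 + conj (B 2 1) * B 2 2 = 0 := by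
      have h := congrArg (fun M => M 1 2) hU2
      simpa [Matrix.mul_apply, Fin.sum_univ_three, Matrix.conjTranspose_apply,
        Complex.star_def, Matrix.one_apply] using h
    have w20 : conj (B 0 2) * B 0 0 + conj (B 1 2) * B 1 0 + conj (B 2 2) * B 2 0 = 0 := by
      have h := congrArg (fun M => M 2 0) hU2
      simpa [Matrix.mul_apply, Fin.sum_univ_three, Matrix.conjTranspose_apply,
        Complex.star_def, Matrix.one_apply] using h
    have w21 : conj (B 0 2) * B 0 1 + conj (B 1 2) * B 1 1 + conj (B 2 2) * B 2 1 = 0 := by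
      have h := congrArg (fun M => M 2 1) hU2
      simpa [Matrix.mul_apply, Fin.sum_univ_three, Matrix.conjTranspose_apply,
        Complex.star_def, Matrix.one_apply] using h
    have w22 : conj (B 0 2) * B 0 2 + conj (B 1 2) * B 1 2 + conj (B 2 2) * B 2 2 = 1 := by
      have h := congrArg (fun M => M 2 2) hU2
      simpa [Matrix.mul_apply, Fin.sum_univ_three, Matrix.conjTranspose_apply,
        Complex.star_def, Matrix.one_apply] using h
    -- matrix of the inverse automorphism
    have hBe : ∀ i, φ (b i) = B i 0 • b 0 + B i 1 • b 1 + B i 2 • b 2 := by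
      intro i; rw [hB i, Fin.sum_univ_three]
    have hBinv : ∀ i, φ.symm (b i) = ∑ j, B.conjTranspose i j • b j := by
      intro i
      have hadd : ∀ x y : L, φ (x + y) = φ x + φ y := fun x y => φ.map_add x y
      have hsm : ∀ (c : ℂ) (x : L), φ (c • x) = c • φ x := fun c x => φ.map_smul c x
      have key : b i = φ (∑ j, B.conjTranspose i j • b j) := by
        rw [Fin.sum_univ_three, hadd, hadd, hsm, hsm, hsm, hBe 0, hBe 1, hBe 2]
        simp only [Matrix.conjTranspose_apply, Complex.star_def]
        fin_cases i <;> simp only [Fin.zero_eta, Fin.mk_one, Fin.reduceFinMk, Fin.isValue]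
        · match_scalars
          · linear_combination w00.symm
          · linear_combination w01.symm
          · linear_combination w02.symm
        · match_scalars
          · linear_combination w11.symm
          · linear_combination w10.symm
          · linear_combination w12.symm
        · match_scalars
          · linear_combination w22.symm
          · linear_combination w20.symm
          · linear_combination w21.symm
      rw [key, φ.symm_apply_apply]
    obtain ⟨e1, e2, e3, e4, e5, e6, e7, e8, e9⟩ := aux9 b hHX hHY hXY φ B hB
    obtain ⟨f1, f2, f3, f4, f5, f6, f7, f8, f9⟩ :=
      aux9 b hHX hHY hXY φ.symm B.conjTranspose hBinv
    simp only [Matrix.conjTranspose_apply, Complex.star_def] at f1 f2 f3 f4 f5 f6 f7 f8 f9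
    have e1c := congrArg (starRingEnd ℂ) e1
    have e4c := congrArg (starRingEnd ℂ) e4
    simp only [map_sub, map_mul, map_add, map_neg, map_ofNat] at e1c e4c
    -- first column vanishes except corner
    have hdc : conj (B 1 0) = 0 := by linear_combination (f8 - 2 * e1c) / 3
    have hd : B 1 0 = 0 := by
      have := congrArg (starRingEnd ℂ) hdc; simpa using this
    have hgc : conj (B 2 0) = 0 := by linear_combination (f9 + 2 * e4c) / 3
    have hg : B 2 0 = 0 := by
      have := congrArg (starRingEnd ℂ) hgc; simpa using this
    have hb1 : B 0 1 = 0 := by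
      linear_combination 2 * B 2 1 * hd - 2 * B 1 1 * hg - e8
    have hc1 : B 0 2 = 0 := by
      linear_combination 2 * B 1 2 * hg - 2 * B 2 2 * hd - e9
    have hef : B 1 1 * conj (B 1 1) + B 1 2 * conj (B 1 2) = 1 := by
      linear_combination u11 - conj (B 1 0) * hd
    by_cases he : B 1 1 = 0
    · -- antidiagonal case
      have hf1 : B 1 2 * conj (B 1 2) = 1 := by
        linear_combination hef - conj (B 1 1) * he
      have hfne : B 1 2 ≠ 0 := by
        intro h0; rw [h0] at hf1; simp at hf1
      have key : (B 0 0 + 1) * B 1 2 = 0 := by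
        linear_combination -e3 / 2 + B 1 0 * hc1
      have ha : B 0 0 = -1 := by
        rcases mul_eq_zero.mp key with h | h
        · linear_combination h
        · exact absurd h hfne
      have hac : conj (B 0 0) = -1 := by rw [ha]; simp
      have h121 : B 1 2 * B 2 1 = 1 := by
        linear_combination -e7 + B 2 2 * he - ha
      have hh : B 2 1 = conj (B 1 2) := by
        linear_combination conj (B 1 2) * h121 - B 2 1 * hf1
      have hic : conj (B 2 2) = 0 := by
        linear_combination (f6 - 2 * conj (B 0 2) * hgc + 2 * conj (B 2 2) * hac) / 4
      have hi : B 2 2 = 0 := by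
        have := congrArg (starRingEnd ℂ) hic; simpa using this
      refine Or.inr ⟨B 1 2, absone _ hf1, ?_⟩
      ext i j
      fin_cases i <;> fin_cases j <;>
        simp [ha, hb1, hc1, hd, he, hg, hh, hi, Matrix.vecHead, Matrix.vecTail]
    · -- diagonal case
      have key : (B 0 0 - 1) * B 1 1 = 0 := by
        linear_combination e2 / 2 + B 1 0 * hb1
      have ha : B 0 0 = 1 := by
        rcases mul_eq_zero.mp key with h | h
        · linear_combination h
        · exact absurd h he
      have hac : conj (B 0 0) = 1 := by rw [ha]; simp
      have hf : B 1 2 = 0 := by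
        linear_combination (-e3 + 2 * B 1 0 * hc1 - 2 * B 1 2 * ha) / 4
      have he1 : B 1 1 * conj (B 1 1) = 1 := by
        linear_combination hef - conj (B 1 2) * hf
      have hhc : conj (B 2 1) = 0 := by
        linear_combination (-f3 + 2 * conj (B 0 1) * hgc - 2 * conj (B 2 1) * hac) / 4
      have hh : B 2 1 = 0 := by
        have := congrArg (starRingEnd ℂ) hhc; simpa using this
      have h112 : B 1 1 * B 2 2 = 1 := by
        linear_combination e7 + B 2 1 * hf + ha
      have hi : B 2 2 = conj (B 1 1) := by
        linear_combination conj (B 1 1) * h112 - B 2 2 * he1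
      refine Or.inl ⟨B 1 1, absone _ he1, ?_⟩
      ext i j
      fin_cases i <;> fin_cases j <;>
        simp [ha, hb1, hc1, hd, hf, hg, hh, hi, Matrix.vecHead, Matrix.vecTail]
  · rintro (⟨α, hα, rfl⟩ | ⟨β, hβ, rfl⟩)
    · have h1 : α * conj α = 1 := by
        rw [Complex.mul_conj, Complex.normSq_eq_norm_sq, hα]; norm_num
      ext i j
      fin_cases i <;> fin_cases j <;>
        simp [Matrix.mul_apply, Fin.sum_univ_three, Matrix.conjTranspose_apply,
          Complex.star_def, Matrix.one_apply] <;>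
        linear_combination h1
    · have h1 : β * conj β = 1 := by
        rw [Complex.mul_conj, Complex.normSq_eq_norm_sq, hβ]; norm_num
      ext i j
      fin_cases i <;> fin_cases j <;>
        simp [Matrix.mul_apply, Fin.sum_univ_three, Matrix.conjTranspose_apply,
          Complex.star_def, Matrix.one_apply] <;>
        linear_combination h1
end

section
/- Let L be an n-dimensional complex Lie algebra with basis x_1,…,x_n. Then L is a nilpotent Lie algebra if and only if its characteristic polynomial satisfies det(z_0·id_L + z_1·ad x_1 + ⋯ + z_n·ad x_n) = z_0^n for all (z_0,z_1,…,z_n) ∈ ℂ^{n+1}. -/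
open scoped BigOperators

open Polynomial in
lemma charpoly_eval_aux {K V : Type*} [Field K] [AddCommGroup V] [Module K V]
    [Module.Finite K V] (f : Module.End K V) (z : K) :
    f.charpoly.eval z = LinearMap.det (z • (LinearMap.id : V →ₗ[K] V) - f) := by
  let b := Module.Free.chooseBasis K V
  rw [← f.charpoly_toMatrix b, Matrix.charpoly, _root_.eval_det,
    Matrix.matPolyEquiv_charmatrix,
    eval_sub, eval_X, eval_C, ← LinearMap.det_toMatrix b, map_sub, _root_.map_smul,
    LinearMap.toMatrix_id]
  congr 1
  ext i j
  simp [Matrix.scalar_apply, Matrix.one_apply, Matrix.diagonal, Matrix.of_apply]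

open Polynomial in
lemma nilpotent_iff_det_aux {K V : Type*} [Field K] [Infinite K] [AddCommGroup V] [Module K V]
    [Module.Finite K V] (f : Module.End K V) :
    IsNilpotent f ↔ ∀ z : K,
      LinearMap.det (z • (LinearMap.id : V →ₗ[K] V) + f) = z ^ Module.finrank K V := by
  have key : ∀ z : K, LinearMap.det (z • (LinearMap.id : V →ₗ[K] V) + f)
      = (-f).charpoly.eval z := by
    intro z
    rw [charpoly_eval_aux, sub_neg_eq_add]
  constructor
  · intro hf z
    rw [key, (hf.neg).charpoly_eq_X_pow_finrank, eval_pow, eval_X]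
  · intro h
    have hp : (-f).charpoly = X ^ Module.finrank K V := by
      apply Polynomial.funext
      intro z
      rw [← key, h z, eval_pow, eval_X]
    have : (-f) ^ Module.finrank K V = 0 := by
      have := LinearMap.aeval_self_charpoly (-f)
      rwa [hp, map_pow, aeval_X] at this
    have hnf : IsNilpotent (-f) := ⟨_, this⟩
    simpa using hnf.neg

attribute [local instance 100] LieRing.ofAssociativeRing

/-- An `n`-dimensional complex Lie algebra `L` with basis `x₁,…,xₙ` is nilpotent
if and only if its characteristic polynomial is `Q_L(z) = z₀ⁿ`. -/
theorem stmt16 {n : ℕ} {L : Type*} [LieRing L] [LieAlgebra ℂ L]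
    (x : Module.Basis (Fin n) ℂ L) :
    LieRing.IsNilpotent L ↔
      ∀ (z0 : ℂ) (z : Fin n → ℂ),
        LinearMap.det (z0 • (LinearMap.id : L →ₗ[ℂ] L)
            + ∑ i, z i • LieAlgebra.ad ℂ L (x i)) = z0 ^ n := by
  have hfin : Module.Finite ℂ L := Module.Finite.of_basis x
  have hrank : Module.finrank ℂ L = n := by
    rw [Module.finrank_eq_card_basis x, Fintype.card_fin]
  have hsum : ∀ z : Fin n → ℂ,
      (∑ i, z i • LieAlgebra.ad ℂ L (x i)) = LieAlgebra.ad ℂ L (∑ i, z i • x i) := by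
    intro z
    have h2 : (LieAlgebra.ad ℂ L).toLinearMap (∑ i, z i • x i)
        = ∑ i, z i • (LieAlgebra.ad ℂ L).toLinearMap (x i) := by
      rw [map_sum]; simp
    exact h2.symm
  constructor
  · intro hL z0 z
    have hnoeth : IsNoetherian ℂ L := isNoetherian_of_isNoetherianRing_of_finite ℂ L
    have h := (nilpotent_iff_det_aux (LieAlgebra.ad ℂ L (∑ i, z i • x i))).mp
      ((LieAlgebra.isNilpotent_iff_forall (R := ℂ) (L := L)).mp hL (∑ i, z i • x i)) z0
    rw [hrank] at h
    rw [hsum]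
    exact h
  · intro h
    have hnoeth : IsNoetherian ℂ L := isNoetherian_of_isNoetherianRing_of_finite ℂ L
    rw [LieAlgebra.isNilpotent_iff_forall (R := ℂ) (L := L)]
    intro y
    rw [nilpotent_iff_det_aux]
    intro z0
    rw [hrank]
    have hy : y = ∑ i, x.repr y i • x i := (x.sum_repr y).symm
    calc LinearMap.det (z0 • (LinearMap.id : L →ₗ[ℂ] L) + LieAlgebra.ad ℂ L y)
        = LinearMap.det (z0 • (LinearMap.id : L →ₗ[ℂ] L)
            + ∑ i, x.repr y i • LieAlgebra.ad ℂ L (x i)) := by rw [hsum, ← hy]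
      _ = z0 ^ n := h z0 _
end

section
/- Let L and L' be n-dimensional solvable complex Lie algebras (n ≥ 1). Suppose N is a nilpotent Lie ideal of L with dim_ℂ N = n−1 and x_n ∈ L with x_n ∉ N, and similarly N' is a nilpotent Lie ideal of L' with dim_ℂ N' = n−1 and x'_n ∈ L' with x'_n ∉ N' (so L and L' are 1-dimensional solvable extensions of nilpotent Lie algebras). If L and L' are isomorphic as Lie algebras, then there exists a nonzero scalar t ∈ ℂ such that the spectrum of ad_L x_n equals t times the spectrum of ad_{L'} x'_n, i.e., σ(ad x_n) = t·σ(ad x'_n) as subsets of ℂ. -/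
open scoped BigOperators

/-- The flag lemma: for a nilpotent ideal `N` of `L`, the series `N.lcs L` reaches `⊥`. -/
lemma aux_lcs_bot {L : Type*} [LieRing L] [LieAlgebra ℂ L]
    (N : LieIdeal ℂ L) (hNnil : LieModule.IsNilpotent N N) :
    ∃ r, LieIdeal.lcs N L r = ⊥ := by
  obtain ⟨k, hk⟩ := (LieModule.isNilpotent_iff ℂ N N).mp hNnil
  have key : ∀ j, LieSubmodule.toSubmodule (LieIdeal.lcs N L (j+1)) ≤
      Submodule.map ((LieSubmodule.toSubmodule N).subtype)
        (LieSubmodule.toSubmodule (LieModule.lowerCentralSeries ℂ (↥N) (↥N) j)) := by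
    intro j
    induction j with
    | zero =>
      rw [LieIdeal.lcs_succ, LieSubmodule.lieIdeal_oper_eq_linear_span', Submodule.span_le]
      rintro z ⟨x, hx, m, -, rfl⟩
      have hmem : ⁅x, m⁆ ∈ N := by
        rw [← lie_skew]
        exact neg_mem (N.lie_mem hx)
      exact ⟨⟨⁅x, m⁆, hmem⟩, by simp, rfl⟩
    | succ j ih =>
      rw [LieIdeal.lcs_succ, LieSubmodule.lieIdeal_oper_eq_linear_span', Submodule.span_le]
      rintro z ⟨x, hx, m, hm, rfl⟩
      have hm' : m ∈ LieSubmodule.toSubmodule (LieIdeal.lcs N L (j+1)) := hm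
      obtain ⟨⟨w, hwN⟩, hw, hcoe⟩ := ih hm'
      refine ⟨⁅(⟨x, hx⟩ : N), (⟨w, hwN⟩ : N)⁆, ?_, ?_⟩
      · rw [LieModule.lowerCentralSeries_succ]
        exact LieSubmodule.lie_mem_lie (LieSubmodule.mem_top _) hw
      · have hcoe' : w = m := hcoe
        subst hcoe'
        rfl
  refine ⟨k + 1, ?_⟩
  rw [← LieSubmodule.toSubmodule_inj]
  have := key k
  rw [hk] at this
  simpa using le_bot_iff.mp (by simpa using this)

/-- If `f` and `g` preserve a finite flag reaching `⊥` and `f - g` lowers the flag,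
then every eigenvalue of `f` is an eigenvalue of `g`. -/
lemma aux_eig_of_flag {V : Type*} [AddCommGroup V] [Module ℂ V] [FiniteDimensional ℂ V]
    (f g : Module.End ℂ V) (W : ℕ → Submodule ℂ V) (r : ℕ)
    (hW0 : W 0 = ⊤) (hWr : W r = ⊥)
    (hg : ∀ k, ∀ v ∈ W k, g v ∈ W k)
    (hfg : ∀ k, ∀ v ∈ W k, f v - g v ∈ W (k+1))
    {μ : ℂ} (hf : Module.End.HasEigenvalue f μ) : Module.End.HasEigenvalue g μ := by
  by_contra hgμ
  set h : Module.End ℂ V := g - μ • 1 with hh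
  have happ : ∀ v, h v = g v - μ • v := by
    intro v; simp [hh, LinearMap.sub_apply]
  have hker : ∀ a, g a = μ • a → a = 0 := by
    intro a ha
    by_contra h0
    exact hgμ (Module.End.hasEigenvalue_of_hasEigenvector
      ⟨Module.End.mem_eigenspace_iff.mpr ha, h0⟩)
  have hinj : Function.Injective h := by
    rw [← LinearMap.ker_eq_bot, eq_bot_iff]
    intro a ha
    have : h a = 0 := ha
    rw [happ, sub_eq_zero] at this
    simpa using hker a this
  obtain ⟨v, hv⟩ := hf.exists_hasEigenvector
  have hfv : f v = μ • v := hv.apply_eq_smul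
  have hvW : ∀ k, v ∈ W k := by
    intro k
    induction k with
    | zero => rw [hW0]; trivial
    | succ k ih =>
      have h1 : h v ∈ W (k+1) := by
        have e1 : h v = -(f v - g v) := by rw [happ, ← hfv]; abel
        rw [e1]
        exact neg_mem (hfg k v ih)
      have hmapsto : ∀ w ∈ W (k+1), h w ∈ W (k+1) := by
        intro w hw
        rw [happ]
        exact sub_mem (hg (k+1) w hw) (Submodule.smul_mem _ μ hw)
      let h' : W (k+1) →ₗ[ℂ] W (k+1) := h.restrict hmapsto
      have hinj' : Function.Injective h' := by
        intro a b hab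
        exact Subtype.ext (hinj (congrArg Subtype.val hab))
      have hsurj' : Function.Surjective h' := LinearMap.injective_iff_surjective.mp hinj'
      obtain ⟨⟨u, hu⟩, hu'⟩ := hsurj' ⟨h v, h1⟩
      have e2 : h u = h v := congrArg Subtype.val hu'
      have e3 : u = v := hinj e2
      exact e3 ▸ hu
  have := hvW r
  rw [hWr] at this
  exact hv.2 (by simpa using this)

/-- Eigenvalues of a nilpotent endomorphism vanish; on a nontrivial space the spectrum is {0}. -/
lemma aux_spec_nilpotent {V : Type*} [AddCommGroup V] [Module ℂ V] [FiniteDimensional ℂ V]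
    [Nontrivial V] {f : Module.End ℂ V} (hf : IsNilpotent f) :
    {μ : ℂ | Module.End.HasEigenvalue f μ} = {0} := by
  obtain ⟨j, hj⟩ := hf
  have hzero : ∀ μ : ℂ, Module.End.HasEigenvalue f μ → μ = 0 := by
    intro μ hμ
    obtain ⟨v, hv⟩ := hμ.exists_hasEigenvector
    have := hv.pow_apply j
    rw [hj] at this
    have h0 : μ ^ j • v = 0 := by simpa using this.symm
    have : μ ^ j = 0 := by
      by_contra hne
      exact hv.2 (by simpa [hne] using congrArg (fun w => (μ ^ j)⁻¹ • w) h0)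
    exact pow_eq_zero_iff'.mp this |>.1
  ext μ
  simp only [Set.mem_setOf_eq, Set.mem_singleton_iff]
  constructor
  · exact hzero μ
  · rintro rfl
    obtain ⟨ν, hν⟩ := Module.End.exists_eigenvalue f
    have := hzero ν hν
    rwa [this] at hν

/-- Spectrum of a nonzero scalar multiple. -/
lemma aux_spec_smul {V : Type*} [AddCommGroup V] [Module ℂ V]
    {c : ℂ} (hc : c ≠ 0) (f : Module.End ℂ V) :
    {μ : ℂ | Module.End.HasEigenvalue (c • f) μ} =
      (fun s => c * s) '' {μ : ℂ | Module.End.HasEigenvalue f μ} := by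
  have key : ∀ (μ : ℂ), Module.End.HasEigenvalue f μ →
      Module.End.HasEigenvalue (c • f) (c * μ) := by
    intro μ hμ
    obtain ⟨v, hv⟩ := hμ.exists_hasEigenvector
    refine Module.End.hasEigenvalue_of_hasEigenvector (x := v)
      ⟨Module.End.mem_eigenspace_iff.mpr ?_, hv.2⟩
    rw [LinearMap.smul_apply, hv.apply_eq_smul, smul_smul]
  have key2 : ∀ (μ : ℂ), Module.End.HasEigenvalue (c • f) μ →
      Module.End.HasEigenvalue f (c⁻¹ * μ) := by
    intro μ hμ
    obtain ⟨v, hv⟩ := hμ.exists_hasEigenvector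
    refine Module.End.hasEigenvalue_of_hasEigenvector (x := v)
      ⟨Module.End.mem_eigenspace_iff.mpr ?_, hv.2⟩
    have := hv.apply_eq_smul
    rw [LinearMap.smul_apply] at this
    have h2 := congrArg (fun w : V => c⁻¹ • w) this
    simp only [smul_smul, inv_mul_cancel₀ hc, one_smul] at h2
    rw [h2, mul_smul]
  ext μ
  simp only [Set.mem_setOf_eq, Set.mem_image]
  constructor
  · intro hμ
    exact ⟨c⁻¹ * μ, key2 μ hμ, by field_simp⟩
  · rintro ⟨s, hs, rfl⟩
    exact key s hs

/-- One direction of spectral transport along a Lie algebra equivalence. -/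
lemma aux_spec_conj_le {L L' : Type*} [LieRing L] [LieAlgebra ℂ L] [LieRing L'] [LieAlgebra ℂ L']
    (e : L ≃ₗ⁅ℂ⁆ L') (x : L) (μ : ℂ)
    (hμ : Module.End.HasEigenvalue (LieAlgebra.ad ℂ L x) μ) :
    Module.End.HasEigenvalue (LieAlgebra.ad ℂ L' (e x)) μ := by
  obtain ⟨v, hv⟩ := hμ.exists_hasEigenvector
  refine Module.End.hasEigenvalue_of_hasEigenvector (x := e v)
    ⟨Module.End.mem_eigenspace_iff.mpr ?_, ?_⟩
  · show ⁅e x, e v⁆ = μ • e v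
    rw [← LieEquiv.map_lie]
    have : ⁅x, v⁆ = μ • v := hv.apply_eq_smul
    rw [this]
    exact LieEquiv.toLinearEquiv e |>.map_smul μ v
  · intro h0
    have hz : e.symm (0 : L') = 0 := by
      have := e.symm.toLinearEquiv.map_zero
      simpa using this
    have : v = e.symm 0 := by simpa using congrArg e.symm h0
    exact hv.2 (by rw [hz] at this; exact this)

/-- Spectra of `ad` transport along Lie algebra equivalences. -/
lemma aux_spec_conj {L L' : Type*} [LieRing L] [LieAlgebra ℂ L] [LieRing L'] [LieAlgebra ℂ L']
    (e : L ≃ₗ⁅ℂ⁆ L') (x : L) :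
    {μ : ℂ | Module.End.HasEigenvalue (LieAlgebra.ad ℂ L' (e x)) μ} =
      {μ : ℂ | Module.End.HasEigenvalue (LieAlgebra.ad ℂ L x) μ} := by
  ext μ
  simp only [Set.mem_setOf_eq]
  constructor
  · intro hμ
    have := aux_spec_conj_le e.symm (e x) μ hμ
    simpa using this
  · exact aux_spec_conj_le e x μ

/-- `ad m` is nilpotent for `m` in a nilpotent ideal. -/
lemma aux_ad_nilpotent {L : Type*} [LieRing L] [LieAlgebra ℂ L]
    (N : LieIdeal ℂ L) (hNnil : LieModule.IsNilpotent N N) {m : L} (hm : m ∈ N) :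
    IsNilpotent (LieAlgebra.ad ℂ L m) := by
  obtain ⟨r, hr⟩ := aux_lcs_bot N hNnil
  have key : ∀ j (v : L), ((LieAlgebra.ad ℂ L m) ^ j) v ∈ LieIdeal.lcs N L j := by
    intro j
    induction j with
    | zero => intro v; simp [LieIdeal.lcs_zero]
    | succ j ih =>
      intro v
      have : ((LieAlgebra.ad ℂ L m) ^ (j+1)) v =
          (LieAlgebra.ad ℂ L m) (((LieAlgebra.ad ℂ L m) ^ j) v) := by
        rw [pow_succ']
        rfl
      rw [this, LieIdeal.lcs_succ]
      exact LieSubmodule.lie_mem_lie hm (ih v)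
  refine ⟨r, ?_⟩
  ext v
  have := key r v
  rw [hr] at this
  simpa using this

/-- Spectrum of `ad (c • x + m)` for `m` in a nilpotent ideal. -/
lemma aux_spec_shift {L : Type*} [LieRing L] [LieAlgebra ℂ L] [FiniteDimensional ℂ L]
    (N : LieIdeal ℂ L) (hNnil : LieModule.IsNilpotent N N)
    (x : L) {m : L} (hm : m ∈ N) (c : ℂ) :
    {μ : ℂ | Module.End.HasEigenvalue (LieAlgebra.ad ℂ L (c • x + m)) μ} =
      {μ : ℂ | Module.End.HasEigenvalue (c • LieAlgebra.ad ℂ L x) μ} := by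
  obtain ⟨r, hr⟩ := aux_lcs_bot N hNnil
  set W : ℕ → Submodule ℂ L := fun k => LieSubmodule.toSubmodule (LieIdeal.lcs N L k) with hW
  set f : Module.End ℂ L := LieAlgebra.ad ℂ L (c • x + m) with hf
  set g : Module.End ℂ L := c • LieAlgebra.ad ℂ L x with hg
  have hW0 : W 0 = ⊤ := by simp [hW, LieIdeal.lcs_zero]
  have hWr : W r = ⊥ := by simp [hW, hr]
  have hfv : ∀ v, f v = c • ⁅x, v⁆ + ⁅m, v⁆ := by
    intro v
    simp [hf, LieAlgebra.ad_apply, add_lie, smul_lie]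
  have hgv : ∀ v, g v = c • ⁅x, v⁆ := by
    intro v
    simp [hg, LieAlgebra.ad_apply]
  have hgW : ∀ k, ∀ v ∈ W k, g v ∈ W k := by
    intro k v hv
    rw [hgv]
    exact Submodule.smul_mem _ c ((LieIdeal.lcs N L k).lie_mem hv)
  have hfW : ∀ k, ∀ v ∈ W k, f v ∈ W k := by
    intro k v hv
    rw [hfv]
    exact Submodule.add_mem _ (Submodule.smul_mem _ c ((LieIdeal.lcs N L k).lie_mem hv))
      ((LieIdeal.lcs N L k).lie_mem hv)
  have hdiff : ∀ k, ∀ v ∈ W k, f v - g v ∈ W (k+1) := by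
    intro k v hv
    have : f v - g v = ⁅m, v⁆ := by rw [hfv, hgv]; abel
    rw [this]
    have : (⁅m, v⁆ : L) ∈ LieIdeal.lcs N L (k+1) := by
      rw [LieIdeal.lcs_succ]
      exact LieSubmodule.lie_mem_lie hm hv
    exact this
  have hdiff' : ∀ k, ∀ v ∈ W k, g v - f v ∈ W (k+1) := by
    intro k v hv
    have : g v - f v = -(f v - g v) := by abel
    rw [this]
    exact neg_mem (hdiff k v hv)
  ext μ
  simp only [Set.mem_setOf_eq]
  exact ⟨fun hμ => aux_eig_of_flag f g W r hW0 hWr hgW hdiff hμ,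
    fun hμ => aux_eig_of_flag g f W r hW0 hWr hfW hdiff' hμ⟩

/-- Decomposition along a codimension-one ideal. -/
lemma aux_decomp {L : Type*} [LieRing L] [LieAlgebra ℂ L] [FiniteDimensional ℂ L] {n : ℕ}
    (hn : 1 ≤ n) (hdim : Module.finrank ℂ L = n) (N : LieIdeal ℂ L)
    (hNdim : Module.finrank ℂ N = n - 1) {x : L} (hx : x ∉ N) (y : L) :
    ∃ c : ℂ, ∃ m ∈ N, y = c • x + m ∧ (y ∉ N → c ≠ 0) := by
  set P : Submodule ℂ L := LieSubmodule.toSubmodule N with hP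
  have hxP : x ∉ P := hx
  have htop : P ⊔ Submodule.span ℂ {x} = ⊤ := by
    by_contra h
    have hlt : P ⊔ Submodule.span ℂ {x} < ⊤ := lt_top_iff_ne_top.mpr h
    have h1 : P < P ⊔ Submodule.span ℂ {x} := by
      refine lt_of_le_of_ne le_sup_left ?_
      intro heq
      apply hxP
      rw [heq]
      exact (le_sup_right : Submodule.span ℂ {x} ≤ P ⊔ Submodule.span ℂ {x}) (Submodule.mem_span_singleton_self x)
    have h2 := Submodule.finrank_lt_finrank_of_lt h1
    have h3 := Submodule.finrank_lt_finrank_of_lt hlt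
    rw [finrank_top] at h3
    rw [hdim] at h3
    have hPdim : Module.finrank ℂ P = n - 1 := hNdim
    omega
  have hy : y ∈ P ⊔ Submodule.span ℂ {x} := by rw [htop]; trivial
  obtain ⟨m, hmP, s, hs, hsum⟩ := Submodule.mem_sup.mp hy
  obtain ⟨c, rfl⟩ := Submodule.mem_span_singleton.mp hs
  refine ⟨c, m, hmP, by rw [← hsum]; abel, ?_⟩
  intro hyN hc
  apply hyN
  rw [← hsum, hc, zero_smul, add_zero]
  exact hmP

/-- If `L` and `L'` are `n`-dimensional solvable complex Lie algebras, each a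
1-dimensional extension of a nilpotent Lie algebra (`N` is a nilpotent ideal of `L` of
dimension `n-1` and `xₙ ∉ N`, similarly for `L'`), and `L ≅ L'`, then there is a nonzero scalar
`t` with `σ(ad xₙ) = t · σ(ad x'ₙ)`. -/
theorem stmt18 {n : ℕ} (hn : 1 ≤ n) {L L' : Type*}
    [LieRing L] [LieAlgebra ℂ L] [LieAlgebra.IsSolvable L]
    [LieRing L'] [LieAlgebra ℂ L'] [LieAlgebra.IsSolvable L']
    (hdim : Module.finrank ℂ L = n) (hdim' : Module.finrank ℂ L' = n)
    [FiniteDimensional ℂ L] [FiniteDimensional ℂ L']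
    (N : LieIdeal ℂ L) (hNnil : LieModule.IsNilpotent N N)
    (hNdim : Module.finrank ℂ N = n - 1)
    (xn : L) (hxn : xn ∉ N)
    (N' : LieIdeal ℂ L') (hN'nil : LieModule.IsNilpotent N' N')
    (hN'dim : Module.finrank ℂ N' = n - 1)
    (xn' : L') (hxn' : xn' ∉ N')
    (hiso : Nonempty (L ≃ₗ⁅ℂ⁆ L')) :
    ∃ t : ℂ, t ≠ 0 ∧
      {μ : ℂ | Module.End.HasEigenvalue (LieAlgebra.ad ℂ L xn) μ} =
        (fun s => t * s) '' {μ : ℂ | Module.End.HasEigenvalue (LieAlgebra.ad ℂ L' xn') μ} := by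
  obtain ⟨e⟩ := hiso
  have hL : Nontrivial L := Module.finrank_pos_iff.mp (by rw [hdim]; omega)
  have hL' : Nontrivial L' := Module.finrank_pos_iff.mp (by rw [hdim']; omega)
  have hconj : {μ : ℂ | Module.End.HasEigenvalue (LieAlgebra.ad ℂ L' (e xn)) μ} =
      {μ : ℂ | Module.End.HasEigenvalue (LieAlgebra.ad ℂ L xn) μ} := aux_spec_conj e xn
  by_cases hx : e xn ∈ N'
  · -- `ad xn` has spectrum {0}
    have h1 : {μ : ℂ | Module.End.HasEigenvalue (LieAlgebra.ad ℂ L' (e xn)) μ} = {0} :=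
      aux_spec_nilpotent (aux_ad_nilpotent N' hN'nil hx)
    have hΛ : {μ : ℂ | Module.End.HasEigenvalue (LieAlgebra.ad ℂ L xn) μ} = {0} := by
      rw [← hconj, h1]
    have hconj' : {μ : ℂ | Module.End.HasEigenvalue (LieAlgebra.ad ℂ L (e.symm xn')) μ} =
        {μ : ℂ | Module.End.HasEigenvalue (LieAlgebra.ad ℂ L' xn') μ} := by
      exact aux_spec_conj e.symm xn'
    have hΛ' : {μ : ℂ | Module.End.HasEigenvalue (LieAlgebra.ad ℂ L' xn') μ} = {0} := by
      by_cases hy : e.symm xn' ∈ N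
      · rw [← hconj']
        exact aux_spec_nilpotent (aux_ad_nilpotent N hNnil hy)
      · obtain ⟨c, m, hmN, hy_eq, hc⟩ := aux_decomp hn hdim N hNdim hxn (e.symm xn')
        have hc0 := hc hy
        rw [← hconj', hy_eq, aux_spec_shift N hNnil xn hmN c, aux_spec_smul hc0, hΛ]
        ext s
        simp
    refine ⟨1, one_ne_zero, ?_⟩
    rw [hΛ, hΛ']
    ext s
    simp
  · obtain ⟨c, m', hm', hx_eq, hc⟩ := aux_decomp hn hdim' N' hN'dim hxn' (e xn)
    have hc0 := hc hx
    refine ⟨c, hc0, ?_⟩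
    rw [← hconj, hx_eq, aux_spec_shift N' hN'nil xn' hm' c, aux_spec_smul hc0]
end

section
/- Let L be an n-dimensional solvable complex Lie algebra with basis x_1,…,x_n whose characteristic polynomial factors as ∏_{j=1}^n (z_0 + Σ_{i=1}^n λ_{ij} z_i) with spectral matrix λ = (λ_{ij}), and let m = rank(λ). Then there exists a basis x̂_1,…,x̂_n of L and a subset S ⊆ {1,…,n} with |S| ≤ m such that the characteristic polynomial with respect to x̂, as a multivariate polynomial Q̂ ∈ ℂ[X_0,X_1,…,X_n], involves only the variables X_0 and X_i with i ∈ S (i.e., every variable occurring in Q̂ lies in {X_0} ∪ {X_i : i ∈ S}). -/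
open scoped BigOperators

/-- For an `n`-dimensional solvable complex Lie algebra `L` whose characteristic
polynomial factors with spectral matrix `λ` of rank `m`, there is a basis `x̂` of `L` and a set
`S` of at most `m` indices such that the characteristic polynomial with respect to `x̂`, as a
multivariate polynomial, only involves the variables `X₀` and `Xᵢ`, `i ∈ S`. -/
theorem stmt19 {n : ℕ} {L : Type*} [LieRing L] [LieAlgebra ℂ L]
    [LieAlgebra.IsSolvable L]
    (x : Module.Basis (Fin n) ℂ L)
    (lam : Matrix (Fin n) (Fin n) ℂ)
    (hfac : ∀ (z0 : ℂ) (z : Fin n → ℂ),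
      LinearMap.det (z0 • (LinearMap.id : L →ₗ[ℂ] L)
          + ∑ i, z i • LieAlgebra.ad ℂ L (x i)) =
        ∏ j, (z0 + ∑ i, lam i j * z i)) :
    ∃ (xhat : Module.Basis (Fin n) ℂ L) (S : Finset (Fin n)), S.card ≤ lam.rank ∧
      (Matrix.det
          ((MvPolynomial.X (0 : Fin (n + 1)) : MvPolynomial (Fin (n + 1)) ℂ) •
              (1 : Matrix (Fin n) (Fin n) (MvPolynomial (Fin (n + 1)) ℂ))
            + ∑ i : Fin n, (MvPolynomial.X i.succ : MvPolynomial (Fin (n + 1)) ℂ) •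
                ((LinearMap.toMatrix xhat xhat (LieAlgebra.ad ℂ L (xhat i))).map
                  MvPolynomial.C))).vars ⊆
        insert (0 : Fin (n + 1)) (S.image Fin.succ) := by
  classical
  -- the kernel of the transpose of `lam` and a complement
  set K : Submodule ℂ (Fin n → ℂ) := LinearMap.ker lam.transpose.mulVecLin with hK
  obtain ⟨W, hW⟩ := Submodule.exists_isCompl K
  set k : ℕ := Module.finrank ℂ K with hkdef
  set r0 : ℕ := Module.finrank ℂ W with hr0def
  have hfinpi : Module.finrank ℂ (Fin n → ℂ) = n := by simp
  have hsum : k + r0 = n := by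
    rw [hkdef, hr0def, Submodule.finrank_add_eq_of_isCompl hW, hfinpi]
  have hrank : r0 = lam.rank := by
    have h1 : lam.transpose.rank + k = n := by
      rw [Matrix.rank, hkdef, hK, LinearMap.finrank_range_add_finrank_ker, hfinpi]
    rw [← Matrix.rank_transpose]
    omega
  -- a basis of `ℂⁿ` adapted to `K` and `W`
  let bK : Module.Basis (Fin k) ℂ K := Module.finBasis ℂ K
  let bW : Module.Basis (Fin r0) ℂ W := Module.finBasis ℂ W
  let e0 : (W × K) ≃ₗ[ℂ] (Fin n → ℂ) := Submodule.prodEquivOfIsCompl W K hW.symm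
  let bsum : Module.Basis (Fin r0 ⊕ Fin k) ℂ (Fin n → ℂ) := (bW.prod bK).map e0
  let eidx : (Fin r0 ⊕ Fin k) ≃ Fin n :=
    finSumFinEquiv.trans (finCongr (by omega))
  let b : Module.Basis (Fin n) ℂ (Fin n → ℂ) := bsum.reindex eidx
  -- the index set
  let S : Finset (Fin n) := Finset.univ.image (fun j : Fin r0 => eidx (Sum.inl j))
  have hcard : S.card ≤ lam.rank := by
    refine le_trans (Finset.card_image_le) ?_
    simp [← hrank]
  -- basis vectors outside `S` are in the kernel
  have hker : ∀ i : Fin n, i ∉ S → b i ∈ K := by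
    intro i hi
    obtain ⟨t, rfl⟩ : ∃ t, eidx t = i := ⟨eidx.symm i, Equiv.apply_symm_apply _ _⟩
    cases t with
    | inl j =>
      exact absurd (Finset.mem_image_of_mem _ (Finset.mem_univ j)) hi
    | inr j =>
      have h1 : b (eidx (Sum.inr j)) = bsum (Sum.inr j) := by
        simp [b, Module.Basis.reindex_apply]
      have h2 : bsum (Sum.inr j) = (bK j : Fin n → ℂ) := by
        simp [bsum, Module.Basis.map_apply, Module.Basis.prod_apply, e0,
          Submodule.coe_prodEquivOfIsCompl']
      rw [h1, h2]
      exact (bK j).2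
  -- the new basis of `L`
  let xhat : Module.Basis (Fin n) ℂ L := b.map x.equivFun.symm
  -- the transformed spectral matrix
  let mu : Fin n → Fin n → ℂ := fun i j => ∑ t, b i t * lam t j
  have hmu0 : ∀ i : Fin n, i ∉ S → ∀ j, mu i j = 0 := by
    intro i hi j
    have h0 : lam.transpose.mulVecLin (b i) = 0 := hker i hi
    have h1 : (lam.transpose.mulVec (b i)) j = 0 := by
      rw [show lam.transpose.mulVec (b i) = lam.transpose.mulVecLin (b i) from rfl, h0]; rfl
    simpa [Matrix.mulVec, dotProduct, Matrix.transpose_apply, mu,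
      mul_comm] using h1
  -- expansion of `ad` in the new basis
  have hadx : ∀ i : Fin n, LieAlgebra.ad ℂ L (xhat i)
      = ∑ j, b i j • LieAlgebra.ad ℂ L (x j) := by
    intro i
    have : xhat i = ∑ j, b i j • x j := by
      simp [xhat, Module.Basis.map_apply, Module.Basis.equivFun_symm_apply]
    calc LieAlgebra.ad ℂ L (xhat i)
        = LieAlgebra.ad ℂ L (∑ j, b i j • x j) := by
          rw [this]
      _ = ∑ j, b i j • LieAlgebra.ad ℂ L (x j) := by
          rw [map_sum]
          simp only [map_smul]
  -- the two polynomials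
  set P : MvPolynomial (Fin (n + 1)) ℂ :=
    Matrix.det
      ((MvPolynomial.X (0 : Fin (n + 1)) : MvPolynomial (Fin (n + 1)) ℂ) •
          (1 : Matrix (Fin n) (Fin n) (MvPolynomial (Fin (n + 1)) ℂ))
        + ∑ i : Fin n, (MvPolynomial.X i.succ : MvPolynomial (Fin (n + 1)) ℂ) •
            ((LinearMap.toMatrix xhat xhat (LieAlgebra.ad ℂ L (xhat i))).map
              MvPolynomial.C)) with hPdef
  set Q : MvPolynomial (Fin (n + 1)) ℂ :=
    ∏ j : Fin n, (MvPolynomial.X (0 : Fin (n + 1))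
      + ∑ i ∈ S, MvPolynomial.C (mu i j) * MvPolynomial.X i.succ) with hQdef
  have hPQ : P = Q := by
    apply MvPolynomial.funext
    intro w
    -- evaluate P
    have hevalP : MvPolynomial.eval w P =
        LinearMap.det ((w 0) • (LinearMap.id : L →ₗ[ℂ] L)
          + ∑ i : Fin n, w i.succ • LieAlgebra.ad ℂ L (xhat i)) := by
      rw [hPdef, RingHom.map_det]
      rw [← LinearMap.det_toMatrix xhat]
      congr 1
      ext a c
      simp [Matrix.map_apply, Matrix.add_apply, Matrix.smul_apply,
        Matrix.one_apply, LinearMap.toMatrix_apply, map_add, map_sum,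
        Finset.sum_apply, Matrix.sum_apply, Finsupp.smul_apply, map_smul,
        LinearMap.add_apply, LinearMap.smul_apply, LinearMap.sum_apply,
        LinearMap.id_apply, Module.Basis.repr_self_apply, mul_ite, mul_one, mul_zero,
        apply_ite (MvPolynomial.eval w), smul_eq_mul]
      rw [Finsupp.single_apply]
      by_cases h : a = c
      · simp [h]
      · rw [if_neg (fun h' : c = a => h h'.symm), if_neg h]
    rw [hevalP]
    -- rewrite the linear map in terms of the old basis
    have hmap : ((w 0) • (LinearMap.id : L →ₗ[ℂ] L)
          + ∑ i : Fin n, w i.succ • LieAlgebra.ad ℂ L (xhat i))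
        = (w 0) • (LinearMap.id : L →ₗ[ℂ] L)
          + ∑ j : Fin n, (∑ i : Fin n, w i.succ * b i j) • LieAlgebra.ad ℂ L (x j) := by
      congr 1
      simp only [hadx, Finset.smul_sum, smul_smul]
      rw [Finset.sum_comm]
      exact Finset.sum_congr rfl fun j _ => by rw [Finset.sum_smul]
    rw [hmap, hfac]
    -- evaluate Q
    have hevalQ : MvPolynomial.eval w Q =
        ∏ j : Fin n, (w 0 + ∑ i ∈ S, mu i j * w i.succ) := by
      simp [hQdef]
    rw [hevalQ]
    refine Finset.prod_congr rfl fun j _ => ?_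
    congr 1
    calc ∑ t, lam t j * (∑ i, w i.succ * b i t)
        = ∑ i : Fin n, mu i j * w i.succ := by
          simp only [Finset.mul_sum]
          rw [Finset.sum_comm]
          refine Finset.sum_congr rfl fun i _ => ?_
          simp only [mu, Finset.sum_mul]
          exact Finset.sum_congr rfl fun t _ => by ring
      _ = ∑ i ∈ S, mu i j * w i.succ := by
          refine (Finset.sum_subset (Finset.subset_univ S) ?_).symm
          intro i _ hi
          rw [hmu0 i hi j, zero_mul]
  -- conclude
  refine ⟨xhat, S, hcard, ?_⟩
  rw [← hPdef, hPQ, hQdef]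
  refine (MvPolynomial.vars_prod _).trans ?_
  intro v hv
  simp only [Finset.mem_biUnion] at hv
  obtain ⟨j, -, hv⟩ := hv
  have h1 := MvPolynomial.vars_add_subset (MvPolynomial.X (0 : Fin (n + 1)))
    (∑ i ∈ S, MvPolynomial.C (mu i j) * MvPolynomial.X i.succ) hv
  rw [Finset.mem_union] at h1
  rcases h1 with h1 | h1
  · rw [MvPolynomial.vars_X] at h1
    simp only [Finset.mem_singleton] at h1
    simp [h1]
  · have h2 := MvPolynomial.vars_sum_subset _ _ h1
    simp only [Finset.mem_biUnion] at h2
    obtain ⟨i, hiS, h2⟩ := h2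
    have h3 := MvPolynomial.vars_mul (MvPolynomial.C (mu i j))
      (MvPolynomial.X i.succ) h2
    rw [Finset.mem_union] at h3
    rcases h3 with h3 | h3
    · rw [MvPolynomial.vars_C] at h3
      exact absurd h3 (Finset.notMem_empty v)
    · rw [MvPolynomial.vars_X] at h3
      simp only [Finset.mem_singleton] at h3
      subst h3
      exact Finset.mem_insert_of_mem (Finset.mem_image_of_mem _ hiS)
end
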